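/- Let E be a directed graph and let v, w ∈ E⁰. Then ΣH(v) ∩ ΣH(w) ≠ ∅ if and only if there exists y ∈ E⁰ with v ≥ y and w ≥ y. -/
import Mathlib


/-- A (countable) directed graph `E = (E⁰, E¹, r, s)`:
a set of vertices, a set of edges, and range and source maps. -/
structure Digraph' where
  V : Type
  E : Type
  src : E → V
  rng : E → V

namespace Digraph'

variable (G : Digraph')

/-- `v ≥ w`: there is a path (possibly of length zero) from `v` to `w`. -/
def Reach (v w : G.V) : Prop :=
  Relation.ReflTransGen (fun a b : G.V => ∃ e : G.E, G.src e = a ∧ G.rng e = b) v w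

/-- A set `H` of vertices is hereditary if `v ∈ H` and `v ≥ w` imply `w ∈ H`. -/
def Hereditary (H : Set G.V) : Prop :=
  ∀ ⦃v w : G.V⦄, v ∈ H → G.Reach v w → w ∈ H

/-- A set `X` of vertices is saturated if every vertex `v` with `0 < |s⁻¹(v)| < ∞`
all of whose emitted edges have range in `X` itself belongs to `X`. -/
def Saturated (X : Set G.V) : Prop :=
  ∀ v : G.V, (G.src ⁻¹' {v}).Finite → (G.src ⁻¹' {v}).Nonempty →
    (∀ e : G.E, G.src e = v → G.rng e ∈ X) → v ∈ X

/-- The saturation `Σ(X)`: the smallest saturated set containing `X`. -/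
def saturation (X : Set G.V) : Set G.V :=
  ⋂₀ {Y : Set G.V | G.Saturated Y ∧ X ⊆ Y}

/-- `ΣH(X)`: the smallest saturated hereditary set containing `X`. -/
def satHered (X : Set G.V) : Set G.V :=
  ⋂₀ {Y : Set G.V | G.Saturated Y ∧ G.Hereditary Y ∧ X ⊆ Y}

end Digraph'

namespace Digraph'

variable {G : Digraph'}

/-- Inductive description of the saturation of a set. -/
inductive Sat (G : Digraph') (D : Set G.V) : G.V → Prop
  | base {x : G.V} (hx : x ∈ D) : Sat G D x
  | step {x : G.V} (hfin : (G.src ⁻¹' {x}).Finite) (hne : (G.src ⁻¹' {x}).Nonempty)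
      (h : ∀ e : G.E, G.src e = x → Sat G D (G.rng e)) : Sat G D x

lemma sat_saturated (D : Set G.V) : G.Saturated {x | Sat G D x} :=
  fun _ hfin hne h => Sat.step hfin hne h

/-- The saturation of a hereditary set is hereditary. -/
lemma sat_hereditary {D : Set G.V} (hD : G.Hereditary D) :
    G.Hereditary {x | Sat G D x} := by
  intro x z hx hxz
  induction hx generalizing z with
  | base hx => exact Sat.base (hD hx hxz)
  | step hfin hne h ih =>
    rcases (Relation.ReflTransGen.cases_head hxz) with rfl | ⟨b, ⟨e, he, hr⟩, hbz⟩
    · exact Sat.step hfin hne h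
    · exact ih e he (hr ▸ hbz)

/-- Every element of the saturation reaches an element of `D`. -/
lemma sat_reach {D : Set G.V} {x : G.V} (hx : Sat G D x) :
    ∃ y ∈ D, G.Reach x y := by
  induction hx with
  | base hx => exact ⟨_, hx, Relation.ReflTransGen.refl⟩
  | step hfin hne h ih =>
    obtain ⟨e, he⟩ := hne
    obtain ⟨y, hy, hr⟩ := ih e he
    exact ⟨y, hy, Relation.ReflTransGen.head ⟨e, he, rfl⟩ hr⟩

/-- The descendants of a vertex. -/
lemma desc_hereditary (v : G.V) : G.Hereditary {x | G.Reach v x} :=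
  fun _ _ h h' => Relation.ReflTransGen.trans h h'

lemma satHered_subset_sat (v : G.V) :
    G.satHered {v} ⊆ {x | Sat G {x | G.Reach v x} x} := by
  intro x hx
  exact hx _ ⟨sat_saturated _, sat_hereditary (desc_hereditary v),
    by rintro y rfl; exact Sat.base Relation.ReflTransGen.refl⟩

end Digraph'

/-- `ΣH(v) ∩ ΣH(w) ≠ ∅` iff `v` and `w` can reach a common vertex. -/
theorem stmt_7 (G : Digraph') [Countable G.V] [Countable G.E] (v w : G.V) :
    (G.satHered {v} ∩ G.satHered {w}).Nonempty ↔
      ∃ y : G.V, G.Reach v y ∧ G.Reach w y := by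
  constructor
  · rintro ⟨x, hxv, hxw⟩
    have hv := Digraph'.satHered_subset_sat v hxv
    have hw := Digraph'.satHered_subset_sat w hxw
    obtain ⟨y, hy, hxy⟩ := Digraph'.sat_reach hv
    have hy' : Digraph'.Sat G {x | G.Reach w x} y :=
      Digraph'.sat_hereditary (Digraph'.desc_hereditary w) hw hxy
    obtain ⟨z, hz, hyz⟩ := Digraph'.sat_reach hy'
    exact ⟨z, Relation.ReflTransGen.trans hy hyz, hz⟩
  · rintro ⟨y, hvy, hwy⟩
    refine ⟨y, ?_, ?_⟩
    · intro Y hY; exact hY.2.1 (hY.2.2 rfl) hvy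
    · intro Y hY; exact hY.2.1 (hY.2.2 rfl) hwy
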